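/- Let B → K and C → K be ring homomorphisms with C → K surjective, A = B ×_K C, and let M be a flat A-module. Then the natural map M → (M ⊗_A B) ×_{M ⊗_A K} (M ⊗_A C) is an isomorphism. -/

import Mathlib

open TensorProduct

/-- For a flat `A`-module `M`, the natural map
`M → (M ⊗_A B) ×_{M ⊗_A K} (M ⊗_A C)` is an isomorphism. -/
theorem ferrand_flat_module_fiber_product
    (A B C K : Type*) [CommRing A] [CommRing B] [CommRing C] [CommRing K]
    [Algebra A B] [Algebra A C] [Algebra A K] [Algebra B K] [Algebra C K]
    [IsScalarTower A B K] [IsScalarTower A C K]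
    (hsurj : Function.Surjective (algebraMap C K))
    (hpull : ∀ (b : B) (c : C), algebraMap B K b = algebraMap C K c →
      ∃! a : A, algebraMap A B a = b ∧ algebraMap A C a = c)
    (M : Type*) [AddCommGroup M] [Module A M] [Module.Flat A M] :
    ∀ (x : M ⊗[A] B) (y : M ⊗[A] C),
      LinearMap.lTensor M (IsScalarTower.toAlgHom A B K).toLinearMap x =
        LinearMap.lTensor M (IsScalarTower.toAlgHom A C K).toLinearMap y →
      ∃! m : M, m ⊗ₜ[A] (1 : B) = x ∧ m ⊗ₜ[A] (1 : C) = y := by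
  intro x y hxy
  set fB := (IsScalarTower.toAlgHom A B K).toLinearMap with hfB
  set fC := (IsScalarTower.toAlgHom A C K).toLinearMap with hfC
  set f : A →ₗ[A] B × C := (Algebra.linearMap A B).prod (Algebra.linearMap A C) with hf
  set g : B × C →ₗ[A] K := fB ∘ₗ LinearMap.fst A B C - fC ∘ₗ LinearMap.snd A B C with hg
  have hfinj : Function.Injective f := by
    intro a a' h
    have hb : algebraMap A B a = algebraMap A B a' := congrArg Prod.fst h
    have hc : algebraMap A C a = algebraMap A C a' := congrArg Prod.snd h
    obtain ⟨u, hu, huniq⟩ := hpull (algebraMap A B a) (algebraMap A C a)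
      (by rw [← IsScalarTower.algebraMap_apply A B K, ← IsScalarTower.algebraMap_apply A C K])
    have h1 : a = u := huniq a ⟨rfl, rfl⟩
    have h2 : a' = u := huniq a' ⟨hb.symm, hc.symm⟩
    rw [h1, h2]
  have hexact : Function.Exact f g := by
    intro p
    constructor
    · intro hp
      have : algebraMap B K p.1 = algebraMap C K p.2 := by
        simpa [hg, sub_eq_zero, hfB, hfC] using hp
      obtain ⟨a, ⟨ha1, ha2⟩, -⟩ := hpull p.1 p.2 this
      exact ⟨a, by simp [hf, ha1, ha2]⟩
    · rintro ⟨a, rfl⟩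
      simp only [hg, hf, LinearMap.sub_apply, LinearMap.comp_apply, LinearMap.fst_apply,
        LinearMap.snd_apply, LinearMap.prod_apply, Function.prod, Algebra.linearMap_apply,
        sub_eq_zero, hfB, hfC, AlgHom.toLinearMap_apply, IsScalarTower.coe_toAlgHom',
        ← IsScalarTower.algebraMap_apply]
  have hTinj : Function.Injective (LinearMap.lTensor M f) :=
    Module.Flat.lTensor_preserves_injective_linearMap f hfinj
  have hTexact : Function.Exact (LinearMap.lTensor M f) (LinearMap.lTensor M g) :=
    Module.Flat.lTensor_exact M hexact
  set e := TensorProduct.prodRight A A M B C with he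
  -- key: g tensored, expressed via components
  have hkey : ∀ z : M ⊗[A] (B × C),
      LinearMap.lTensor M g z = LinearMap.lTensor M fB (e z).1 - LinearMap.lTensor M fC (e z).2 := by
    intro z
    induction z using TensorProduct.induction_on with
    | zero => simp
    | tmul m bc =>
      obtain ⟨b, c⟩ := bc
      simp [hg, he, TensorProduct.tmul_sub]
    | add u v hu hv =>
      simp only [map_add, Prod.fst_add, Prod.snd_add, hu, hv]
      abel
  set z := e.symm (x, y) with hz
  have hez : e z = (x, y) := by simp [hz]
  have hzker : LinearMap.lTensor M g z = 0 := by
    rw [hkey, hez]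
    simpa [sub_eq_zero] using hxy
  obtain ⟨w, hw⟩ := (hTexact z).mp hzker
  set m := TensorProduct.rid A M w with hm
  have hwm : w = m ⊗ₜ[A] (1 : A) := by
    have : (TensorProduct.rid A M).symm m = w := by simp [hm]
    rw [← this]; simp [TensorProduct.rid_symm_apply]
  have hmain : ∀ m' : M, LinearMap.lTensor M f (m' ⊗ₜ[A] (1 : A)) =
      e.symm (m' ⊗ₜ[A] (1 : B), m' ⊗ₜ[A] (1 : C)) := by
    intro m'
    rw [LinearMap.lTensor_tmul]
    have h1 : f (1 : A) = ((1 : B), (1 : C)) := by simp [hf]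
    rw [h1, he]
    exact (TensorProduct.prodRight_symm_tmul A A M B C m' (1 : B) (1 : C)).symm
  refine ⟨m, ?_, ?_⟩
  · have : e.symm (m ⊗ₜ[A] (1 : B), m ⊗ₜ[A] (1 : C)) = z := by
      rw [← hmain, ← hwm, hw]
    have := congrArg e this
    rw [LinearEquiv.apply_symm_apply, hez] at this
    exact ⟨congrArg Prod.fst this, congrArg Prod.snd this⟩
  · rintro m' ⟨h1, h2⟩
    have h3 : LinearMap.lTensor M f (m' ⊗ₜ[A] (1 : A)) = LinearMap.lTensor M f w := by
      rw [hmain, h1, h2, hw]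
    have h4 := hTinj h3
    have h5 := congrArg (TensorProduct.rid A M) h4
    simpa [hm] using h5
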